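/- For all k ≥ 2 and j ≥ 0 there exists a move sequence that cleanly computes k^j − 1 with space at most 1 + (k−1)·j and total move count at most (2k − 1)^j. -/
import Mathlib


/-- A move sequence in the reversible pebble game modelling intermediate
uncomputation of iterated out-of-place squarings.  `conf t` is the
configuration (finite set of pebbled nodes) at time `t ≤ T`; at step
`t < T` exactly the node `move t` is toggled, subject to the legality
condition that either `move t = 0` or `move t ≥ 1` and its predecessor
is pebbled. -/
structure MoveSeq where
  /-- total move count -/
  T : ℕ
  /-- configuration at each time step -/
  conf : ℕ → Finset ℕ
  /-- the node toggled at step `t` (relevant for `t < T`) -/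
  move : ℕ → ℕ
  init : conf 0 = ∅
  legal : ∀ t < T, move t = 0 ∨ (1 ≤ move t ∧ move t - 1 ∈ conf t)
  step : ∀ t < T, conf (t + 1) =
    if move t ∈ conf t then (conf t).erase (move t) else insert (move t) (conf t)

/-- The space of a move sequence: the maximum number of pebbled nodes over
all visited configurations. -/
def MoveSeq.space (M : MoveSeq) : ℕ :=
  (Finset.range (M.T + 1)).sup fun t => (M.conf t).card

/-- The number of squaring operations: the number of moves toggling a node `i ≥ 1`. -/
def MoveSeq.squarings (M : MoveSeq) : ℕ :=
  ((Finset.range M.T).filter fun t => 1 ≤ M.move t).card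

/-- The sequence cleanly computes `m` if its final configuration is `{m}`. -/
def MoveSeq.CleanlyComputes (M : MoveSeq) (m : ℕ) : Prop :=
  M.conf M.T = {m}

/-- Some configuration visited by the sequence contains the node `i`. -/
def MoveSeq.Visits (M : MoveSeq) (i : ℕ) : Prop :=
  ∃ t ≤ M.T, i ∈ M.conf t

namespace KaryPebble

def toggle (S : Finset ℕ) (i : ℕ) : Finset ℕ :=
  if i ∈ S then S.erase i else insert i S

def run (S : Finset ℕ) (l : List ℕ) : Finset ℕ := l.foldl toggle S

def Legal : Finset ℕ → List ℕ → Prop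
  | _, [] => True
  | S, i :: l => (i = 0 ∨ 1 ≤ i ∧ i - 1 ∈ S) ∧ Legal (toggle S i) l

def maxCard : Finset ℕ → List ℕ → ℕ
  | S, [] => S.card
  | S, i :: l => max S.card (maxCard (toggle S i) l)

@[simp] lemma run_nil (S : Finset ℕ) : run S [] = S := rfl
@[simp] lemma run_cons (S : Finset ℕ) (i : ℕ) (l : List ℕ) :
    run S (i :: l) = run (toggle S i) l := rfl

lemma run_append (S : Finset ℕ) (l1 l2 : List ℕ) :
    run S (l1 ++ l2) = run (run S l1) l2 := by
  simp [run, List.foldl_append]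

lemma mem_toggle {x i : ℕ} (h : x ≠ i) (S : Finset ℕ) :
    x ∈ toggle S i ↔ x ∈ S := by
  unfold toggle; split <;> simp [h]

lemma toggle_toggle (S : Finset ℕ) (i : ℕ) : toggle (toggle S i) i = S := by
  unfold toggle
  by_cases h : i ∈ S <;> simp [h, Finset.erase_insert, Finset.insert_erase]

lemma card_le_maxCard (S : Finset ℕ) (l : List ℕ) : S.card ≤ maxCard S l := by
  cases l <;> simp [maxCard]

lemma Legal_append {S : Finset ℕ} {l1 l2 : List ℕ} (h1 : Legal S l1)
    (h2 : Legal (run S l1) l2) : Legal S (l1 ++ l2) := by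
  induction l1 generalizing S with
  | nil => simpa using h2
  | cons i l ih => exact ⟨h1.1, ih h1.2 h2⟩

lemma maxCard_append (S : Finset ℕ) (l1 l2 : List ℕ) :
    maxCard S (l1 ++ l2) = max (maxCard S l1) (maxCard (run S l1) l2) := by
  induction l1 generalizing S with
  | nil =>
    have h := card_le_maxCard S l2
    show maxCard S l2 = max (maxCard S []) (maxCard (run S []) l2)
    simp only [maxCard, run_nil]
    omega
  | cons i l ih => simp [maxCard, ih, Nat.max_assoc]

lemma run_reverse (S : Finset ℕ) (l : List ℕ) : run (run S l) l.reverse = S := by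
  induction l generalizing S with
  | nil => rfl
  | cons i l ih =>
    rw [List.reverse_cons, run_cons, run_append, ih]
    exact toggle_toggle S i

lemma Legal_reverse {S : Finset ℕ} {l : List ℕ} (h : Legal S l) :
    Legal (run S l) l.reverse := by
  induction l generalizing S with
  | nil => trivial
  | cons i l ih =>
    rw [List.reverse_cons, run_cons]
    refine Legal_append (ih h.2) ?_
    rw [run_reverse]
    refine ⟨?_, trivial⟩
    rcases h.1 with h0 | ⟨h1, hm⟩
    · exact Or.inl h0
    · exact Or.inr ⟨h1, (mem_toggle (by omega) S).mpr hm⟩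

lemma maxCard_reverse (S : Finset ℕ) (l : List ℕ) :
    maxCard (run S l) l.reverse = maxCard S l := by
  induction l generalizing S with
  | nil => rfl
  | cons i l ih =>
    rw [List.reverse_cons, run_cons, maxCard_append, run_reverse, ih]
    have h1 : (toggle S i).card ≤ maxCard (toggle S i) l := card_le_maxCard _ _
    simp only [maxCard, toggle_toggle]
    omega

lemma run_take_succ {l : List ℕ} {t : ℕ} (ht : t < l.length) (S : Finset ℕ) :
    run S (l.take (t+1)) = toggle (run S (l.take t)) (l.getD t 0) := by
  induction l generalizing S t with
  | nil => simp at ht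
  | cons i l ih =>
    cases t with
    | zero => simp [run, toggle]
    | succ t => simpa using ih (by simpa using ht) (toggle S i)

lemma legal_getD {S : Finset ℕ} {l : List ℕ} (h : Legal S l) :
    ∀ t < l.length, l.getD t 0 = 0 ∨ (1 ≤ l.getD t 0 ∧ l.getD t 0 - 1 ∈ run S (l.take t)) := by
  induction l generalizing S with
  | nil => intro t ht; simp at ht
  | cons i l ih =>
    intro t ht
    cases t with
    | zero => simpa using h.1
    | succ t => simpa using ih h.2 t (by simpa using ht)

lemma card_run_take_le (S : Finset ℕ) (l : List ℕ) (t : ℕ) :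
    (run S (l.take t)).card ≤ maxCard S l := by
  induction l generalizing S t with
  | nil => simpa using card_le_maxCard S []
  | cons i l ih =>
    cases t with
    | zero => simpa using card_le_maxCard S (i :: l)
    | succ t =>
      simp only [List.take_succ_cons, run_cons, maxCard]
      exact le_trans (ih (toggle S i) t) (le_max_right _ _)

/-- forward sweep: `g 0 ++ g 1 ++ ⋯ ++ g (b-1)` -/
def seqF (g : ℕ → List ℕ) : ℕ → List ℕ
  | 0 => []
  | b+1 => seqF g b ++ g b

/-- reverse sweep: `(g (b-1)).reverse ++ ⋯ ++ (g 0).reverse` -/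
def seqR (g : ℕ → List ℕ) : ℕ → List ℕ
  | 0 => []
  | b+1 => (g b).reverse ++ seqR g b

/-- the k-ary recursion program at offset `c`, depth `j` -/
def P (k : ℕ) : ℕ → ℕ → List ℕ
  | 0, c => [c]
  | j+1, c =>
      seqF (fun b => P k j (c + b * k^j)) k ++
      seqR (fun b => P k j (c + b * k^j)) (k-1)

def Hyp (k j c : ℕ) (S : Finset ℕ) : Prop :=
  (c = 0 ∨ (1 ≤ c ∧ c - 1 ∈ S)) ∧ (∀ x ∈ S, x < c ∨ c + k^j ≤ x)

def Concl (k j c : ℕ) (S : Finset ℕ) : Prop :=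
  Legal S (P k j c) ∧ run S (P k j c) = insert (c + k^j - 1) S ∧
  (P k j c).length = (2*k-1)^j ∧ maxCard S (P k j c) ≤ S.card + 1 + (k-1)*j

lemma fwd {k : ℕ} (hk : 2 ≤ k) {j : ℕ} (IH : ∀ c S, Hyp k j c S → Concl k j c S) :
    ∀ b, b ≤ k → ∀ c S, Hyp k (j+1) c S →
      Legal S (seqF (fun i => P k j (c + i * k^j)) b) ∧
      run S (seqF (fun i => P k j (c + i * k^j)) b)
        = S ∪ (Finset.range b).image (fun i => c + (i+1)*k^j - 1) ∧
      (seqF (fun i => P k j (c + i * k^j)) b).length = b * (2*k-1)^j ∧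
      maxCard S (seqF (fun i => P k j (c + i * k^j)) b) ≤ S.card + b + (k-1)*j := by
  have hK : 1 ≤ k^j := Nat.one_le_pow _ _ (by omega)
  intro b
  induction b with
  | zero =>
    intro _ c S _
    refine ⟨trivial, by simp [seqF], by simp [seqF], ?_⟩
    show S.card ≤ S.card + 0 + (k-1)*j
    omega
  | succ b ihb =>
    intro hb c S hS
    obtain ⟨L1, R1, N1, M1⟩ := ihb (by omega) c S hS
    set f : ℕ → ℕ := fun i => c + (i+1)*k^j - 1 with hf
    set E : Finset ℕ := Finset.image f (Finset.range b) with hE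
    set S' : Finset ℕ := S ∪ E with hS'
    have hEcard : E.card ≤ b := le_trans (Finset.card_image_le) (by simp)
    have hS'card : S'.card ≤ S.card + b :=
      le_trans (Finset.card_union_le _ _) (by omega)
    have hEmem : ∀ x ∈ E, ∃ i, i < b ∧ x = c + (i+1)*k^j - 1 := by
      intro x hx
      simp only [hE, Finset.mem_image, Finset.mem_range] at hx
      obtain ⟨i, hi, rfl⟩ := hx
      exact ⟨i, hi, rfl⟩
    have hblock : Hyp k j (c + b * k^j) S' := by
      constructor
      · cases b with
        | zero =>
          simp only [Nat.zero_mul, Nat.add_zero]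
          rcases hS.1 with h0 | ⟨h1, h2⟩
          · exact Or.inl h0
          · exact Or.inr ⟨h1, Finset.mem_union_left _ h2⟩
        | succ b' =>
          have hmul : 1 ≤ (b'+1) * k^j := Nat.mul_pos (by omega) hK
          refine Or.inr ⟨by omega, ?_⟩
          refine Finset.mem_union_right _ ?_
          simp only [hE, Finset.mem_image, Finset.mem_range]
          exact ⟨b', by omega, rfl⟩
      · intro x hx
        rcases Finset.mem_union.mp hx with hx | hx
        · rcases hS.2 x hx with h | h
          · left; omega
          · right
            have h1 : (b+1) * k^j ≤ k * k^j := Nat.mul_le_mul_right _ hb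
            have h2 : k^(j+1) = k * k^j := by rw [pow_succ, Nat.mul_comm]
            have h3 : (b+1) * k^j = b * k^j + k^j := by ring
            omega
        · obtain ⟨i, hi, rfl⟩ := hEmem x hx
          left
          have h1 : (i+1)*k^j ≤ b*k^j := Nat.mul_le_mul_right _ (by omega)
          have h2 : 0 < (i+1)*k^j := Nat.mul_pos (by omega) hK
          omega
    obtain ⟨L2, R2, N2, M2⟩ := IH (c + b * k^j) S' hblock
    have hfb : c + b * k^j + k^j - 1 = f b := by
      simp only [hf]
      have : (b+1) * k^j = b * k^j + k^j := by ring
      omega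
    refine ⟨?_, ?_, ?_, ?_⟩
    · exact Legal_append L1 (by rw [R1]; exact L2)
    · rw [seqF, run_append, R1, R2, hfb, Finset.range_add_one, Finset.image_insert,
        Finset.union_insert, hS', hE]
    · simp only [seqF, List.length_append, N1, N2]; ring
    · rw [seqF, maxCard_append, R1]
      exact max_le (by omega) (by omega)

lemma rev {k : ℕ} (hk : 2 ≤ k) {j : ℕ} (IH : ∀ c S, Hyp k j c S → Concl k j c S) :
    ∀ b, b ≤ k - 1 → ∀ c S, Hyp k (j+1) c S →
      Legal (insert (c + k^(j+1) - 1) (S ∪ (Finset.range b).image (fun i => c + (i+1)*k^j - 1)))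
        (seqR (fun i => P k j (c + i * k^j)) b) ∧
      run (insert (c + k^(j+1) - 1) (S ∪ (Finset.range b).image (fun i => c + (i+1)*k^j - 1)))
        (seqR (fun i => P k j (c + i * k^j)) b) = insert (c + k^(j+1) - 1) S ∧
      (seqR (fun i => P k j (c + i * k^j)) b).length = b * (2*k-1)^j ∧
      maxCard (insert (c + k^(j+1) - 1) (S ∪ (Finset.range b).image (fun i => c + (i+1)*k^j - 1)))
        (seqR (fun i => P k j (c + i * k^j)) b) ≤ S.card + b + 1 + (k-1)*j := by
  have hK : 1 ≤ k^j := Nat.one_le_pow _ _ (by omega)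
  intro b
  induction b with
  | zero =>
    intro _ c S _
    refine ⟨trivial, ?_, by simp [seqR], ?_⟩
    · show insert (c + k^(j+1) - 1) (S ∪ (Finset.range 0).image fun i => c + (i+1)*k^j - 1)
        = insert (c + k^(j+1) - 1) S
      simp
    · show (insert (c + k^(j+1) - 1) (S ∪ (Finset.range 0).image fun i => c + (i+1)*k^j - 1)).card
        ≤ S.card + 0 + 1 + (k-1)*j
      simp only [Finset.range_zero, Finset.image_empty, Finset.union_empty]
      have := Finset.card_insert_le (c + k^(j+1) - 1) S
      omega
  | succ b ihb =>
    intro hb c S hS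
    obtain ⟨L1, R1, N1, M1⟩ := ihb (by omega) c S hS
    set f : ℕ → ℕ := fun i => c + (i+1)*k^j - 1 with hf
    set top : ℕ := c + k^(j+1) - 1 with htop
    set E : Finset ℕ := Finset.image f (Finset.range b) with hE
    set S0 : Finset ℕ := insert top (S ∪ E) with hS0
    have hEcard : E.card ≤ b := le_trans (Finset.card_image_le) (by simp)
    have hS0card : S0.card ≤ S.card + b + 1 := by
      refine le_trans (Finset.card_insert_le _ _) ?_
      have := Finset.card_union_le S E
      omega
    have hEmem : ∀ x ∈ E, ∃ i, i < b ∧ x = c + (i+1)*k^j - 1 := by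
      intro x hx
      simp only [hE, Finset.mem_image, Finset.mem_range] at hx
      obtain ⟨i, hi, rfl⟩ := hx
      exact ⟨i, hi, rfl⟩
    have hksq : k^(j+1) = k * k^j := by rw [pow_succ, Nat.mul_comm]
    have hblock : Hyp k j (c + b * k^j) S0 := by
      constructor
      · cases b with
        | zero =>
          simp only [Nat.zero_mul, Nat.add_zero]
          rcases hS.1 with h0 | ⟨h1, h2⟩
          · exact Or.inl h0
          · exact Or.inr ⟨h1, Finset.mem_insert_of_mem (Finset.mem_union_left _ h2)⟩
        | succ b' =>
          have hmul : 1 ≤ (b'+1) * k^j := Nat.mul_pos (by omega) hK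
          refine Or.inr ⟨by omega, ?_⟩
          refine Finset.mem_insert_of_mem (Finset.mem_union_right _ ?_)
          simp only [hE, Finset.mem_image, Finset.mem_range]
          exact ⟨b', by omega, rfl⟩
      · intro x hx
        rcases Finset.mem_insert.mp hx with hx | hx
        · subst hx
          right
          have h1 : (b+2) * k^j ≤ k * k^j := Nat.mul_le_mul_right _ (by omega)
          have h3 : (b+2) * k^j = b * k^j + k^j + k^j := by ring
          simp only [htop]
          omega
        · rcases Finset.mem_union.mp hx with hx | hx
          · rcases hS.2 x hx with h | h
            · left; omega
            · right
              have h1 : (b+1) * k^j ≤ k * k^j := Nat.mul_le_mul_right _ (by omega)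
              have h3 : (b+1) * k^j = b * k^j + k^j := by ring
              omega
          · obtain ⟨i, hi, rfl⟩ := hEmem x hx
            left
            have h1 : (i+1)*k^j ≤ b*k^j := Nat.mul_le_mul_right _ (by omega)
            have h2 : 0 < (i+1)*k^j := Nat.mul_pos (by omega) hK
            omega
    obtain ⟨L2, R2, N2, M2⟩ := IH (c + b * k^j) S0 hblock
    have hfb : c + b * k^j + k^j - 1 = f b := by
      simp only [hf]
      have : (b+1) * k^j = b * k^j + k^j := by ring
      omega
    have hT : insert top (S ∪ (Finset.range (b+1)).image f)
        = run S0 (P k j (c + b * k^j)) := by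
      rw [R2, hfb, hS0, hE, Finset.range_add_one, Finset.image_insert, Finset.union_insert,
        Finset.insert_comm]
    refine ⟨?_, ?_, ?_, ?_⟩
    · rw [seqR, hT]
      refine Legal_append (Legal_reverse L2) ?_
      rw [run_reverse]
      exact L1
    · rw [seqR, hT, run_append, run_reverse]
      exact R1
    · simp only [seqR, List.length_append, List.length_reverse, N1, N2]; ring
    · rw [seqR, hT, maxCard_append, maxCard_reverse, run_reverse]
      exact max_le (by omega) (by omega)

lemma main {k : ℕ} (hk : 2 ≤ k) : ∀ j c S, Hyp k j c S → Concl k j c S := by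
  intro j
  induction j with
  | zero =>
    intro c S hS
    have hp : (k:ℕ)^0 = 1 := pow_zero k
    have hc : c ∉ S := by
      intro h
      rcases hS.2 c h with h' | h' <;> omega
    refine ⟨⟨hS.1, trivial⟩, ?_, by simp [P], ?_⟩
    · show toggle S c = insert (c + k^0 - 1) S
      simp [toggle, hc]
    · have h3 : (toggle S c).card ≤ S.card + 1 := by
        rw [toggle, if_neg hc]; exact Finset.card_insert_le _ _
      show max S.card (toggle S c).card ≤ S.card + 1 + (k-1)*0
      omega
  | succ j IH =>
    intro c S hS
    have hK : 1 ≤ k^j := Nat.one_le_pow _ _ (by omega)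
    have hk1 : k - 1 + 1 = k := by omega
    have hksq : k^(j+1) = k * k^j := by rw [pow_succ, Nat.mul_comm]
    obtain ⟨L1, R1, N1, M1⟩ := fwd hk IH k le_rfl c S hS
    obtain ⟨L2, R2, N2, M2⟩ := rev hk IH (k-1) le_rfl c S hS
    have hftop : c + (k - 1 + 1) * k^j - 1 = c + k^(j+1) - 1 := by
      rw [hk1, hksq]
    have hEk : S ∪ (Finset.range k).image (fun i => c + (i+1)*k^j - 1)
        = insert (c + k^(j+1) - 1)
            (S ∪ (Finset.range (k-1)).image (fun i => c + (i+1)*k^j - 1)) := by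
      have hrange : Finset.range k = insert (k-1) (Finset.range (k-1)) := by
        conv_lhs => rw [← hk1]
        rw [Finset.range_add_one]
      rw [hrange]
      simp only [Finset.image_insert, Finset.union_insert]
      rw [hftop]
    have hm : (k-1)*(j+1) = (k-1)*j + (k-1) := by ring
    refine ⟨?_, ?_, ?_, ?_⟩
    · rw [P]
      exact Legal_append L1 (by rw [R1, hEk]; exact L2)
    · rw [P, run_append, R1, hEk]
      exact R2
    · have h2 : k + (k - 1) = 2*k - 1 := by omega
      rw [P, List.length_append, N1, N2, pow_succ, ← h2]
      ring
    · rw [P, maxCard_append, R1, hEk]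
      exact max_le (by omega) (by omega)

end KaryPebble

open KaryPebble in
/-- the `k`-ary recursion strategy cleanly computes `k^j - 1`
with space at most `1 + (k-1)·j` and move count at most `(2k - 1)^j`. -/
theorem kary_recursion_cost (k j : ℕ) (hk : 2 ≤ k) :
    ∃ M : MoveSeq, M.CleanlyComputes (k ^ j - 1) ∧
      M.space ≤ 1 + (k - 1) * j ∧ M.T ≤ (2 * k - 1) ^ j := by
  obtain ⟨L, R, N, Msp⟩ := main hk j 0 ∅ ⟨Or.inl rfl, by simp⟩
  set l : List ℕ := P k j 0 with hl
  refine ⟨⟨l.length, fun t => run ∅ (l.take t), fun t => l.getD t 0, rfl,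
    fun t ht => legal_getD L t ht, fun t ht => run_take_succ ht ∅⟩, ?_, ?_, ?_⟩
  · show run ∅ (l.take l.length) = _
    rw [List.take_length, R]
    simp
  · show Finset.sup _ _ ≤ _
    refine Finset.sup_le fun t _ => ?_
    refine le_trans (card_run_take_le ∅ l t) ?_
    simpa using Msp
  · show l.length ≤ _
    omega
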